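/- Some RCGBARs admit no pure Nash equilibrium under contention-tolerant preferences. Concretely, for an atomic resource A, the two-player RCGBAR with γ_1 = A, γ_2 = A·A, ε_1 = {A}, ε_2 = {A} satisfies NE^ct(G) = ∅. -/

import Mathlib

open scoped Classical

/-- A resource contribution game over atomic resource type `Res` with player set `ι`:
each player has a goal (a resource bundle, i.e. a multiset of atomic resources) and
an endowment (a resource bag, i.e. a multiset of resource bundles). -/
structure RCG (Res ι : Type*) where
  goal : ι → Multiset Res
  endow : ι → Multiset (Multiset Res)

namespace RCG

variable {Res ι : Type*} [Fintype ι]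

/-- A profile assigns to each player a bag (his contribution). -/
abbrev Profile (Res ι : Type*) := ι → Multiset (Multiset Res)

/-- Outcome of a profile: the multiset sum of all contributions. -/
def out (P : Profile Res ι) : Multiset (Multiset Res) := ∑ i, P i

/-- The bag `X` can be transformed into the bundle `B`: `♭(B) ⊆ ♭•(X)`. -/
def Trans (X : Multiset (Multiset Res)) (B : Multiset Res) : Prop := B ≤ X.sum

/-- Player `i` is potentially satisfied by profile `P`. -/
def Psat (G : RCG Res ι) (P : Profile Res ι) (i : ι) : Prop :=
  Trans (out P) (G.goal i)

/-- The set of players potentially satisfied by `P`. -/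
noncomputable def psatPlayers (G : RCG Res ι) (P : Profile Res ι) : Finset ι :=
  Finset.univ.filter fun i => Psat G P i

/-- The profile `P` is contentious. -/
def Contentious (G : RCG Res ι) (P : Profile Res ι) : Prop :=
  ¬ Trans (out P) (∑ j ∈ psatPlayers G P, G.goal j)

/-- Restriction of bundle `B` to the resource types occurring in `C`. -/
noncomputable def restr (B C : Multiset Res) : Multiset Res := B.filter (· ∈ C)

/-- The profile `P` is contentious for player `i`. -/
def ContentiousFor (G : RCG Res ι) (P : Profile Res ι) (i : ι) : Prop :=
  Psat G P i ∧ ¬ Trans (out P) (∑ j ∈ psatPlayers G P, restr (G.goal j) (G.goal i))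

/-- The three kinds of preferences: contention-tolerant, (public) contention-averse,
private contention-averse. -/
inductive Pref | ct | ca | pca

/-- `P` is a good profile for player `i` according to preference kind `pref`. -/
def Good (pref : Pref) (G : RCG Res ι) (P : Profile Res ι) (i : ι) : Prop :=
  match pref with
  | .ct => Psat G P i
  | .ca => Psat G P i ∧ ¬ Contentious G P
  | .pca => Psat G P i ∧ ¬ ContentiousFor G P i

/-- Player `i` strictly prefers `P` over `Q` (i.e. `Q ≺^pref_i P`). -/
def Prefers (pref : Pref) (G : RCG Res ι) (i : ι) (Q P : Profile Res ι) : Prop :=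
  (¬ Good pref G P i ∧ ¬ Good pref G Q i ∧ P i < Q i) ∨
  (Good pref G P i ∧ ¬ Good pref G Q i) ∨
  (Good pref G P i ∧ Good pref G Q i ∧ P i < Q i)

/-- `C` is a profitable deviation for player `i` from profile `P`. -/
noncomputable def ProfDev (pref : Pref) (G : RCG Res ι) (P : Profile Res ι) (i : ι)
    (C : Multiset (Multiset Res)) : Prop :=
  C ≤ G.endow i ∧ Prefers pref G i P (Function.update P i C)

/-- `P` is a pure Nash equilibrium of `G` according to `pref`:
`P` is a profile of `G` and no player has a profitable deviation. -/
noncomputable def NE (pref : Pref) (G : RCG Res ι) (P : Profile Res ι) : Prop :=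
  (∀ i, P i ≤ G.endow i) ∧ ∀ i C, ¬ ProfDev pref G P i C

/-- `G` is an RCG with endowments as bags of atomic resources. -/
def IsRCGBAR (G : RCG Res ι) : Prop :=
  ∀ i, ∀ B ∈ G.endow i, ∃ r : Res, B = {r}

/-- `G` has independent objectives. -/
def IndepObjectives (G : RCG Res ι) : Prop :=
  ∀ i j : ι, i ≠ j → ∀ r : Res, r ∈ G.goal i → r ∉ G.goal j

end RCG

/-- the two-player RCGBAR with `γ₁ = A`, `γ₂ = A·A`, `ε₁ = ε₂ = {A}`
has no pure Nash equilibrium under contention-tolerant preferences. -/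
theorem RCGBAR_no_NE_ct {Res : Type*} (A : Res)
    (G : RCG Res (Fin 2))
    (hgoal : G.goal = ![({A} : Multiset Res), ({A, A} : Multiset Res)])
    (hendow : G.endow = ![({({A} : Multiset Res)} : Multiset (Multiset Res)),
                          ({({A} : Multiset Res)} : Multiset (Multiset Res))]) :
    ∀ P : RCG.Profile Res (Fin 2), ¬ RCG.NE .ct G P := by
  intro P hNE
  obtain ⟨hle, hdev⟩ := hNE
  have h0 := hle 0
  have h1 := hle 1
  rw [hendow] at h0 h1
  simp only [Matrix.cons_val_zero, Matrix.cons_val_one, Matrix.head_cons,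
    Multiset.le_singleton] at h0 h1
  rcases h0 with h0 | h0 <;> rcases h1 with h1 | h1
  · -- P = (0,0): player 0 deviates to {{A}}
    apply hdev 0 {({A} : Multiset Res)}
    refine ⟨by simp [hendow], Or.inr (Or.inl ⟨?_, ?_⟩)⟩
    · simp [RCG.Good, RCG.Psat, RCG.Trans, RCG.out, Fin.sum_univ_two,
        Function.update, hgoal, h1]
    · simp [RCG.Good, RCG.Psat, RCG.Trans, RCG.out, Fin.sum_univ_two,
        hgoal, h0, h1]
  · -- P = (0,{{A}}): player 1 deviates to 0
    apply hdev 1 0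
    refine ⟨by simp, Or.inl ⟨?_, ?_, ?_⟩⟩
    · simp [RCG.Good, RCG.Psat, RCG.Trans, RCG.out, Fin.sum_univ_two,
        Function.update, hgoal, h0]
    · simp [RCG.Good, RCG.Psat, RCG.Trans, RCG.out, Fin.sum_univ_two,
        hgoal, h0, h1]
      intro h
      simpa using congrArg Multiset.card h
    · simp [Function.update, h1, Multiset.lt_iff_cons_le]
  · -- P = ({{A}},0): player 1 deviates to {{A}}
    apply hdev 1 {({A} : Multiset Res)}
    refine ⟨by simp [hendow], Or.inr (Or.inl ⟨?_, ?_⟩)⟩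
    · simp [RCG.Good, RCG.Psat, RCG.Trans, RCG.out, Fin.sum_univ_two,
        Function.update, hgoal, h0]
    · simp [RCG.Good, RCG.Psat, RCG.Trans, RCG.out, Fin.sum_univ_two,
        hgoal, h0, h1]
      intro h
      simpa using congrArg Multiset.card h
  · -- P = ({{A}},{{A}}): player 0 deviates to 0
    apply hdev 0 0
    refine ⟨by simp, Or.inr (Or.inr ⟨?_, ?_, ?_⟩)⟩
    · simp [RCG.Good, RCG.Psat, RCG.Trans, RCG.out, Fin.sum_univ_two,
        Function.update, hgoal, h1]
    · simp [RCG.Good, RCG.Psat, RCG.Trans, RCG.out, Fin.sum_univ_two,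
        hgoal, h0, h1]
    · simp [Function.update, h0, Multiset.lt_iff_cons_le]
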